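/- For a closed convex cone K ⊆ ℝⁿ and standard Gaussian X ∼ N(0, Iₙ), the Gaussian width ω(K ∩ Sⁿ⁻¹)² is at most δ(K), where δ(K) = E[‖Π_K(X)‖²] and ω(C) = E[sup_{z∈C} ⟨X, z⟩]. -/

import Mathlib

open MeasureTheory ProbabilityTheory

/-- The standard Gaussian measure on `ℝⁿ`. -/
noncomputable def stdGaussianPi (n : ℕ) : Measure (Fin n → ℝ) :=
  Measure.pi fun _ => gaussianReal 0 1

namespace Stmt17Aux

open Real

lemma aux_cs {n : ℕ} (x y : Fin n → ℝ) :
    ∑ i, x i * y i ≤ Real.sqrt (∑ i, x i ^ 2) * Real.sqrt (∑ i, y i ^ 2) := by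
  have h := Finset.sum_mul_sq_le_sq_mul_sq Finset.univ x y
  have h1 : ∑ i, x i * y i ≤ |∑ i, x i * y i| := le_abs_self _
  rw [← Real.sqrt_sq_eq_abs] at h1
  refine h1.trans ?_
  rw [← Real.sqrt_mul (by positivity)]
  exact Real.sqrt_le_sqrt h

lemma proj_vi {n : ℕ} {K : Set (Fin n → ℝ)} (hconv : Convex ℝ K) {x p : Fin n → ℝ}
    (hpK : p ∈ K) (hmin : ∀ y ∈ K, ∑ i, (x i - p i) ^ 2 ≤ ∑ i, (x i - y i) ^ 2)
    {y : Fin n → ℝ} (hy : y ∈ K) : ∑ i, (x i - p i) * (y i - p i) ≤ 0 := by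
  set S := ∑ i, (x i - p i) * (y i - p i) with hS
  set C := ∑ i, (y i - p i) ^ 2 with hC
  have hCnn : (0:ℝ) ≤ C := Finset.sum_nonneg fun i _ => sq_nonneg _
  have key : ∀ t : ℝ, 0 ≤ t → t ≤ 1 → 2 * t * S ≤ t ^ 2 * C := by
    intro t ht0 ht1
    have hyt : (fun i => p i + t * (y i - p i)) ∈ K := by
      have h2 := hconv hpK hy (by linarith : (0:ℝ) ≤ 1 - t) ht0 (by ring)
      convert h2 using 1
      funext i
      simp only [Pi.add_apply, Pi.smul_apply, smul_eq_mul]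
      ring
    have h := hmin _ hyt
    have expand : ∑ i, (x i - (fun i => p i + t * (y i - p i)) i) ^ 2
        = ∑ i, (x i - p i) ^ 2 - 2 * t * S + t ^ 2 * C := by
      simp only [hS, hC, Finset.mul_sum, ← Finset.sum_sub_distrib, ← Finset.sum_add_distrib]
      exact Finset.sum_congr rfl fun i _ => by ring
    rw [expand] at h
    linarith
  by_contra hSpos
  push_neg at hSpos
  rcases eq_or_lt_of_le hCnn with hC0 | hC0
  · have h1 := key 1 zero_le_one le_rfl
    rw [← hC0] at h1
    nlinarith
  · have ht0 : 0 < min 1 (S / C) := lt_min one_pos (div_pos hSpos hC0)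
    have h2 : min 1 (S / C) ≤ S / C := min_le_right _ _
    have h3 := key _ ht0.le (min_le_left _ _)
    have h4 : min 1 (S / C) * C ≤ S := (le_div_iff₀ hC0).mp h2
    nlinarith

/-- Key pointwise bound: for `z ∈ K` with `∑ z² = 1`, `⟨x, z⟩ ≤ ‖p‖`. -/
lemma key_bound {n : ℕ} {K : Set (Fin n → ℝ)} (hconv : Convex ℝ K)
    (hcone : ∀ (c : ℝ), 0 ≤ c → ∀ x ∈ K, c • x ∈ K) {x p : Fin n → ℝ}
    (hpK : p ∈ K) (hmin : ∀ y ∈ K, ∑ i, (x i - p i) ^ 2 ≤ ∑ i, (x i - y i) ^ 2)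
    {z : Fin n → ℝ} (hz : z ∈ K) (hz1 : ∑ i, (z i) ^ 2 = 1) :
    ∑ i, x i * z i ≤ Real.sqrt (∑ i, p i ^ 2) := by
  have hpz : p + z ∈ K := by
    have hmid := hconv hpK hz (by norm_num : (0:ℝ) ≤ 1/2) (by norm_num : (0:ℝ) ≤ 1/2)
      (by norm_num)
    have h2 := hcone 2 (by norm_num) _ hmid
    convert h2 using 1
    funext i
    simp only [Pi.add_apply, Pi.smul_apply, smul_eq_mul]
    ring
  have h1 := proj_vi hconv hpK hmin hpz
  have h1' : ∑ i, (x i - p i) * z i ≤ 0 := by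
    refine le_of_eq_of_le ?_ h1
    exact Finset.sum_congr rfl fun i _ => by simp [Pi.add_apply]
  have h2 : ∑ i, p i * z i ≤ Real.sqrt (∑ i, p i ^ 2) := by
    have := aux_cs p z
    rwa [hz1, Real.sqrt_one, mul_one] at this
  have hsplit : ∑ i, x i * z i = (∑ i, (x i - p i) * z i) + ∑ i, p i * z i := by
    rw [← Finset.sum_add_distrib]
    exact Finset.sum_congr rfl fun i _ => by ring
  linarith

/-- Euclidean nonexpansiveness of the projection. -/
lemma proj_lip {n : ℕ} {K : Set (Fin n → ℝ)} (hconv : Convex ℝ K)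
    (projK : (Fin n → ℝ) → (Fin n → ℝ))
    (hprojK : ∀ x, projK x ∈ K ∧
      ∀ y ∈ K, ∑ i, (x i - projK x i) ^ 2 ≤ ∑ i, (x i - y i) ^ 2)
    (x y : Fin n → ℝ) :
    ∑ i, (projK x i - projK y i) ^ 2 ≤ ∑ i, (x i - y i) ^ 2 := by
  set p := projK x
  set q := projK y
  have h1 := proj_vi hconv (hprojK x).1 (hprojK x).2 (hprojK y).1
  have h2 := proj_vi hconv (hprojK y).1 (hprojK y).2 (hprojK x).1
  set L := ∑ i, (p i - q i) ^ 2 with hL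
  have hLnn : (0:ℝ) ≤ L := Finset.sum_nonneg fun i _ => sq_nonneg _
  have h3 : L ≤ ∑ i, (x i - y i) * (p i - q i) := by
    have hsum : (∑ i, (x i - p i) * (q i - p i)) + (∑ i, (y i - q i) * (p i - q i))
        = (∑ i, (x i - y i) * (p i - q i)) * (-1) + L := by
      simp only [hL, ← Finset.sum_add_distrib, Finset.sum_mul, ← Finset.sum_add_distrib]
      exact Finset.sum_congr rfl fun i _ => by ring
    nlinarith [aux_cs (fun i => x i - y i) (fun i => p i - q i)]
  have h4 := aux_cs (fun i => x i - y i) (fun i => p i - q i)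
  have h5 : L ≤ Real.sqrt (∑ i, (x i - y i) ^ 2) * Real.sqrt L := le_trans h3 h4
  rcases eq_or_lt_of_le hLnn with hL0 | hL0
  · rw [← hL0]; exact Finset.sum_nonneg fun i _ => sq_nonneg _
  · have hs : Real.sqrt L * Real.sqrt L = L := Real.mul_self_sqrt hLnn
    have hsL : 0 < Real.sqrt L := Real.sqrt_pos.mpr hL0
    have h6 : Real.sqrt L ≤ Real.sqrt (∑ i, (x i - y i) ^ 2) := by
      rw [← hs] at h5
      exact le_of_mul_le_mul_right (by linarith [h5]) hsL
    calc L = Real.sqrt L * Real.sqrt L := hs.symm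
      _ ≤ Real.sqrt (∑ i, (x i - y i) ^ 2) * Real.sqrt (∑ i, (x i - y i) ^ 2) :=
          mul_le_mul h6 h6 hsL.le (Real.sqrt_nonneg _)
      _ = ∑ i, (x i - y i) ^ 2 := Real.mul_self_sqrt (Finset.sum_nonneg fun i _ => sq_nonneg _)

/-- The projection is continuous. -/
lemma proj_cont {n : ℕ} (projK : (Fin n → ℝ) → (Fin n → ℝ))
    (hlip : ∀ x y, ∑ i, (projK x i - projK y i) ^ 2 ≤ ∑ i, (x i - y i) ^ 2) :
    Continuous projK := by
  have hdist : ∀ x y, dist (projK x) (projK y) ≤ Real.sqrt n * dist x y := by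
    intro x y
    refine dist_pi_le_iff (by positivity) |>.mpr fun i => ?_
    have hcoord : dist (projK x i) (projK y i)
        ≤ Real.sqrt (∑ j, (projK x j - projK y j) ^ 2) := by
      rw [Real.dist_eq, ← Real.sqrt_sq_eq_abs]
      exact Real.sqrt_le_sqrt (Finset.single_le_sum (f := fun j => (projK x j - projK y j) ^ 2)
        (fun j _ => sq_nonneg _) (Finset.mem_univ i))
    have hsum : ∑ j, (x j - y j) ^ 2 ≤ (n : ℝ) * dist x y ^ 2 := by
      have h := Finset.sum_le_card_nsmul Finset.univ (fun j => (x j - y j) ^ 2) (dist x y ^ 2)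
        (fun j _ => by
          calc (x j - y j) ^ 2 = dist (x j) (y j) ^ 2 := by rw [Real.dist_eq, sq_abs]
            _ ≤ dist x y ^ 2 := pow_le_pow_left₀ dist_nonneg (dist_le_pi_dist x y j) 2)
      simpa [Finset.card_univ, nsmul_eq_mul] using h
    calc dist (projK x i) (projK y i)
        ≤ Real.sqrt (∑ j, (projK x j - projK y j) ^ 2) := hcoord
      _ ≤ Real.sqrt ((n : ℝ) * dist x y ^ 2) := Real.sqrt_le_sqrt ((hlip x y).trans hsum)
      _ = Real.sqrt n * dist x y := by
          rw [Real.sqrt_mul (by positivity), Real.sqrt_sq dist_nonneg]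
  have h : LipschitzWith (Real.toNNReal (Real.sqrt n)) projK := by
    refine LipschitzWith.of_dist_le_mul fun x y => ?_
    rw [Real.coe_toNNReal _ (Real.sqrt_nonneg _)]
    exact hdist x y
  exact h.continuous

/-- Bound on the norm of the projection. -/
lemma proj_norm_bound {n : ℕ} {K : Set (Fin n → ℝ)} (hK0 : (0 : Fin n → ℝ) ∈ K)
    {x p : Fin n → ℝ}
    (hmin : ∀ y ∈ K, ∑ i, (x i - p i) ^ 2 ≤ ∑ i, (x i - y i) ^ 2) :
    ∑ i, p i ^ 2 ≤ 4 * ∑ i, (x i) ^ 2 := by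
  have h0 := hmin 0 hK0
  simp only [Pi.zero_apply, sub_zero] at h0
  have hD := Finset.sum_mul_sq_le_sq_mul_sq Finset.univ x (fun i => x i - p i)
  have hp : ∑ i, p i ^ 2
      = ∑ i, (x i) ^ 2 - 2 * (∑ i, x i * (x i - p i)) + ∑ i, (x i - p i) ^ 2 := by
    simp only [Finset.mul_sum, ← Finset.sum_sub_distrib, ← Finset.sum_add_distrib]
    exact Finset.sum_congr rfl fun i _ => by ring
  have hA : (0:ℝ) ≤ ∑ i, (x i) ^ 2 := Finset.sum_nonneg fun i _ => sq_nonneg _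
  have hB : (0:ℝ) ≤ ∑ i, (x i - p i) ^ 2 := Finset.sum_nonneg fun i _ => sq_nonneg _
  nlinarith [sq_nonneg ((∑ i, (x i) ^ 2) + ∑ i, x i * (x i - p i))]

lemma gauss_pdf_toReal (x : ℝ) :
    (gaussianPDF 0 1 x).toReal = (Real.sqrt (2 * π))⁻¹ * rexp (-(1/2) * x ^ 2) := by
  rw [gaussianPDF_def, ENNReal.toReal_ofReal (gaussianPDFReal_nonneg _ _ _),
    gaussianPDFReal_def]
  norm_num [NNReal.coe_one]
  ring_nf
  tauto

lemma integrable_gauss_of (f : ℝ → ℝ) (hf : Measurable f)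
    (hint : Integrable (fun x => f x * rexp (-(1/2) * x ^ 2)) volume) :
    Integrable f (gaussianReal 0 1) := by
  rw [gaussianReal_of_var_ne_zero 0 one_ne_zero]
  rw [integrable_withDensity_iff (measurable_gaussianPDF 0 1)
    (Filter.Eventually.of_forall fun x => ENNReal.ofReal_lt_top)]
  simp only [gauss_pdf_toReal]
  exact (hint.const_mul ((Real.sqrt (2 * π))⁻¹)).congr
    (Filter.Eventually.of_forall fun x => by ring)

lemma integrable_id_gauss : Integrable (fun x : ℝ => x) (gaussianReal 0 1) := by
  refine integrable_gauss_of _ measurable_id ?_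
  simpa using integrable_mul_exp_neg_mul_sq (b := 1/2) (by norm_num)

lemma integrable_sq_gauss : Integrable (fun x : ℝ => x ^ 2) (gaussianReal 0 1) := by
  refine integrable_gauss_of _ (by fun_prop) ?_
  have h := integrable_rpow_mul_exp_neg_mul_sq (b := 1/2) (by norm_num) (s := 2) (by norm_num)
  refine h.congr (Filter.Eventually.of_forall fun x => ?_)
  norm_cast

lemma integral_id_gauss : ∫ x, x ∂(gaussianReal 0 1) = 0 := by
  have hmap : (gaussianReal 0 1).map (fun x => (-1 : ℝ) * x) = gaussianReal 0 1 := by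
    rw [gaussianReal_map_const_mul]
    norm_num
  have h : ∫ x, x ∂(gaussianReal 0 1) = ∫ x, (-1 : ℝ) * x ∂(gaussianReal 0 1) := by
    nth_rewrite 1 [← hmap]
    exact integral_map (by fun_prop) aestronglyMeasurable_id
  simp only [neg_one_mul] at h
  rw [integral_neg] at h
  linarith

lemma map_eval (n : ℕ) (i : Fin n) :
    (stdGaussianPi n).map (fun x => x i) = gaussianReal 0 1 := by
  apply Measure.ext
  intro s hs
  rw [Measure.map_apply (measurable_pi_apply i) hs]
  have h : (fun x : Fin n → ℝ => x i) ⁻¹' s =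
      Set.pi Set.univ (Function.update (fun _ => Set.univ) i s) := by
    rw [Set.eval_preimage]
  rw [h, stdGaussianPi, Measure.pi_pi]
  rw [Finset.prod_eq_single i (fun j _ hj => by simp [Function.update_of_ne hj]) (by simp)]
  simp

lemma integrable_eval (n : ℕ) (i : Fin n) :
    Integrable (fun x : Fin n → ℝ => x i) (stdGaussianPi n) := by
  have h := integrable_id_gauss
  rw [← map_eval n i] at h
  exact (integrable_map_measure aestronglyMeasurable_id
    (measurable_pi_apply i).aemeasurable).mp h

lemma integrable_eval_sq (n : ℕ) (i : Fin n) :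
    Integrable (fun x : Fin n → ℝ => (x i) ^ 2) (stdGaussianPi n) := by
  have h := integrable_sq_gauss
  rw [← map_eval n i] at h
  exact (integrable_map_measure ((measurable_id.pow_const 2).aestronglyMeasurable)
    (measurable_pi_apply i).aemeasurable).mp h

lemma integral_eval (n : ℕ) (i : Fin n) :
    ∫ x, x i ∂(stdGaussianPi n) = 0 := by
  have h := integral_map (μ := stdGaussianPi n) (φ := fun x : Fin n → ℝ => x i)
    (measurable_pi_apply i).aemeasurable (f := fun y : ℝ => y) aestronglyMeasurable_id
  rw [map_eval] at h
  rw [← h]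
  exact integral_id_gauss

end Stmt17Aux

open Stmt17Aux in
/-- For a closed convex cone `K ⊆ ℝⁿ`, the squared Gaussian width of `K ∩ Sⁿ⁻¹` is at most
the statistical dimension `δ(K) = E‖Π_K X‖²`. -/
theorem stmt17 (n : ℕ) (K : Set (Fin n → ℝ)) (hne : K.Nonempty) (hcl : IsClosed K)
    (hconv : Convex ℝ K) (hcone : ∀ (c : ℝ), 0 ≤ c → ∀ x ∈ K, c • x ∈ K)
    (projK : (Fin n → ℝ) → (Fin n → ℝ))
    (hprojK : ∀ x, projK x ∈ K ∧
      ∀ y ∈ K, ∑ i, (x i - projK x i) ^ 2 ≤ ∑ i, (x i - y i) ^ 2) :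
    (∫ x, sSup ((fun z => ∑ i, x i * z i) ''
        (K ∩ {z : Fin n → ℝ | ∑ i, (z i) ^ 2 = 1})) ∂(stdGaussianPi n)) ^ 2 ≤
      ∫ x, (∑ i, (projK x i) ^ 2) ∂(stdGaussianPi n) := by
  classical
  haveI hprob : IsProbabilityMeasure (stdGaussianPi n) := by
    unfold stdGaussianPi; infer_instance
  set μ := stdGaussianPi n with hμ
  set f : (Fin n → ℝ) → ℝ := fun x => sSup ((fun z => ∑ i, x i * z i) ''
      (K ∩ {z : Fin n → ℝ | ∑ i, (z i) ^ 2 = 1})) with hfdef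
  set g2 : (Fin n → ℝ) → ℝ := fun x => ∑ i, (projK x i) ^ 2 with hg2def
  have hg2nn : ∀ x, 0 ≤ g2 x := fun x => Finset.sum_nonneg fun i _ => sq_nonneg _
  have hRHS : 0 ≤ ∫ x, g2 x ∂μ := integral_nonneg hg2nn
  have hK0 : (0 : Fin n → ℝ) ∈ K := by
    obtain ⟨x₀, hx₀⟩ := hne
    simpa using hcone 0 le_rfl x₀ hx₀
  have key : ∀ x z, z ∈ K → (∑ i, (z i) ^ 2 = 1) →
      ∑ i, x i * z i ≤ Real.sqrt (g2 x) :=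
    fun x z hz h1 => key_bound hconv hcone (hprojK x).1 (hprojK x).2 hz h1
  have hfg : ∀ x, f x ≤ Real.sqrt (g2 x) := by
    intro x
    refine Real.sSup_le ?_ (Real.sqrt_nonneg _)
    rintro a ⟨z, ⟨hzK, hz1⟩, rfl⟩
    exact key x z hzK hz1
  by_cases hf : Integrable f μ
  · -- main case
    have hcont := proj_cont projK (proj_lip hconv projK hprojK)
    have hg2cont : Continuous g2 := by
      refine continuous_finset_sum _ fun i _ => ?_
      exact ((continuous_apply i).comp hcont).pow 2
    have hintx2 : Integrable (fun x : Fin n → ℝ => ∑ i, (x i) ^ 2) μ :=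
      integrable_finset_sum _ fun i _ => integrable_eval_sq n i
    have hg2int : Integrable g2 μ := by
      refine Integrable.mono' (hintx2.const_mul 4) hg2cont.aestronglyMeasurable
        (Filter.Eventually.of_forall fun x => ?_)
      rw [Real.norm_eq_abs, abs_of_nonneg (hg2nn x)]
      exact proj_norm_bound hK0 (hprojK x).2
    set g : (Fin n → ℝ) → ℝ := fun x => Real.sqrt (g2 x) with hgdef
    have hgcont : Continuous g := Real.continuous_sqrt.comp hg2cont
    have hgnn : ∀ x, 0 ≤ g x := fun x => Real.sqrt_nonneg _
    have hgint : Integrable g μ := by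
      refine Integrable.mono' ((integrable_const (1:ℝ)).add hg2int)
        hgcont.aestronglyMeasurable (Filter.Eventually.of_forall fun x => ?_)
      rw [Real.norm_eq_abs, abs_of_nonneg (hgnn x)]
      have hs := Real.sq_sqrt (hg2nn x)
      have hsnn := Real.sqrt_nonneg (g2 x)
      simp only [hgdef, Pi.add_apply]
      nlinarith [sq_nonneg (Real.sqrt (g2 x) - 1)]
    have h1 : ∫ x, f x ∂μ ≤ ∫ x, g x ∂μ := integral_mono hf hgint hfg
    have h0 : 0 ≤ ∫ x, f x ∂μ := by
      by_cases hS : (K ∩ {z : Fin n → ℝ | ∑ i, (z i) ^ 2 = 1}).Nonempty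
      · obtain ⟨z₀, hz₀K, hz₀1⟩ := hS
        have hℓint : Integrable (fun x : Fin n → ℝ => ∑ i, x i * z₀ i) μ :=
          integrable_finset_sum _ fun i _ => (integrable_eval n i).mul_const _
        have hℓ0 : ∫ x, (∑ i, x i * z₀ i) ∂μ = 0 := by
          rw [integral_finset_sum _ fun i _ => (integrable_eval n i).mul_const _]
          refine Finset.sum_eq_zero fun i _ => ?_
          rw [integral_mul_const, integral_eval, zero_mul]
        have hle : ∀ x, (∑ i, x i * z₀ i) ≤ f x := by
          intro x
          refine le_csSup ⟨Real.sqrt (g2 x), ?_⟩ ⟨z₀, ⟨hz₀K, hz₀1⟩, rfl⟩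
          rintro a ⟨z, ⟨hzK, hz1⟩, rfl⟩
          exact key x z hzK hz1
        calc (0:ℝ) = ∫ x, (∑ i, x i * z₀ i) ∂μ := hℓ0.symm
          _ ≤ ∫ x, f x ∂μ := integral_mono hℓint hf hle
      · have hemp : K ∩ {z : Fin n → ℝ | ∑ i, (z i) ^ 2 = 1} = ∅ :=
          Set.not_nonempty_iff_eq_empty.mp hS
        have : f = fun _ => 0 := by
          funext x
          rw [hfdef]
          simp [hemp, Real.sSup_empty]
        rw [this]
        simp
    have h2 : (∫ x, g x ∂μ) ^ 2 ≤ ∫ x, g2 x ∂μ := by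
      set c := ∫ x, g x ∂μ with hc
      have hvar : 0 ≤ ∫ x, (g x - c) ^ 2 ∂μ := integral_nonneg fun x => sq_nonneg _
      have hexp : (fun x => (g x - c) ^ 2) = fun x => (g2 x - (2 * c) * g x) + c ^ 2 := by
        funext x
        have hs : g x ^ 2 = g2 x := Real.sq_sqrt (hg2nn x)
        nlinarith [hs]
      rw [hexp] at hvar
      have hIsub : Integrable (fun x => g2 x - 2 * c * g x) μ :=
        hg2int.sub (hgint.const_mul (2 * c))
      have e1 : ∫ x, (g2 x - 2 * c * g x + c ^ 2) ∂μ
          = (∫ x, (g2 x - 2 * c * g x) ∂μ) + c ^ 2 := by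
        rw [integral_add hIsub (integrable_const _), integral_const]
        simp [measure_univ]
      have e2 : ∫ x, (g2 x - 2 * c * g x) ∂μ = (∫ x, g2 x ∂μ) - 2 * c * c := by
        rw [integral_sub hg2int (hgint.const_mul (2 * c)), integral_const_mul, ← hc]
      rw [e1, e2] at hvar
      nlinarith [hvar]
    calc (∫ x, f x ∂μ) ^ 2 ≤ (∫ x, g x ∂μ) ^ 2 := by
          exact pow_le_pow_left₀ h0 h1 2
      _ ≤ ∫ x, g2 x ∂μ := h2
  · rw [integral_undef hf]
    simpa using hRHS
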